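/- For the unique solutions (X_λ, Y_λ) of λX_λ + B₁(X_λ,Y_λ) = 0, λY_λ + B₂(X_λ,Y_λ) = 0, one has limsup_{λ→0+} X_λ > 1/√2 and limsup_{λ→0+} Y_λ > −1/√2. -/

import Mathlib

open Real Filter Topology

/-- The 2×2 matrix C(α,β) from the paper. -/
noncomputable def Cmat (a b : ℝ) : Matrix (Fin 2) (Fin 2) ℝ :=
  1 + b • !![-a, -1 + a; -1 + a, -a] + (1 - b) • !![-1 + a, -a; -a, -1 + a]

/-- The running costs L₁, L₂. -/
noncomputable def Lfun (i : Fin 2) (a b : ℝ) : ℝ :=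
  if i = 0 then a * b + 2 * (1 - a) * (1 - b) else -(a * b) - 2 * (1 - a) * (1 - b)

/-- b_i(α,β,u₁,u₂) = c_{i1}(α,β)u₁ + c_{i2}(α,β)u₂ − L_i(α,β). -/
noncomputable def bfun (i : Fin 2) (a b u₁ u₂ : ℝ) : ℝ :=
  Cmat a b i 0 * u₁ + Cmat a b i 1 * u₂ - Lfun i a b

/-- A_i(u₁,u₂) = max_{α∈𝒜} min_{β∈ℬ} b_i(α,β,u₁,u₂). -/
noncomputable def Afun (As Bs : Set ℝ) (i : Fin 2) (u₁ u₂ : ℝ) : ℝ :=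
  sSup ((fun a => sInf ((fun b => bfun i a b u₁ u₂) '' Bs)) '' As)

/-- The set 𝒜 = {2 − √2 + 4^{−k} : k ≥ 1} ∪ {2 − √2}. -/
noncomputable def calA : Set ℝ :=
  {x | ∃ k : ℕ, 1 ≤ k ∧ x = 2 - Real.sqrt 2 + (4 : ℝ) ^ (-(k : ℤ))} ∪ {2 - Real.sqrt 2}

/-- The set ℬ = {0, 1}. -/
def calB : Set ℝ := {0, 1}

/-- B_i(u₁,u₂) = max_{α∈𝒜} min_{β∈ℬ} b_i(α,β,u₁,u₂). -/
noncomputable def Bop (i : Fin 2) (u₁ u₂ : ℝ) : ℝ := Afun calA calB i u₁ u₂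

/-! ### Auxiliary development -/

noncomputable def nnf (a s : ℝ) : ℝ := min (a*s - 2*(1-a)) ((1-a)*s - a)
noncomputable def mmf (a s : ℝ) : ℝ := min (2*(1-a) - a*s) (a - (1-a)*s)
noncomputable def FF (s : ℝ) : ℝ := sSup ((fun a => nnf a s) '' calA)
noncomputable def GG (s : ℝ) : ℝ := sSup ((fun a => mmf a s) '' calA)

lemma Bop0_eq (u₁ u₂ : ℝ) : Bop 0 u₁ u₂ = FF (u₁ - u₂) := by
  unfold Bop Afun FF
  congr 1
  apply Set.image_congr'
  intro a
  show sInf ((fun b => bfun 0 a b u₁ u₂) '' {0, 1}) = _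
  rw [Set.image_pair, csInf_pair, nnf]
  congr 1
  · simp [bfun, Cmat, Lfun, Matrix.one_apply]; ring
  · simp [bfun, Cmat, Lfun, Matrix.one_apply]; ring

lemma Bop1_eq (u₁ u₂ : ℝ) : Bop 1 u₁ u₂ = GG (u₁ - u₂) := by
  unfold Bop Afun GG
  congr 1
  apply Set.image_congr'
  intro a
  show sInf ((fun b => bfun 1 a b u₁ u₂) '' {0, 1}) = _
  rw [Set.image_pair, csInf_pair, mmf]
  congr 1
  · simp [bfun, Cmat, Lfun, Matrix.one_apply]; ring
  · simp [bfun, Cmat, Lfun, Matrix.one_apply]; ring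

lemma sq2_sq : Real.sqrt 2 * Real.sqrt 2 = 2 := Real.mul_self_sqrt (by norm_num)
lemma sq2_lb : (1.4142 : ℝ) < Real.sqrt 2 := by nlinarith [sq2_sq, Real.sqrt_nonneg 2]
lemma sq2_ub : Real.sqrt 2 < 1.41422 := by nlinarith [sq2_sq, Real.sqrt_nonneg 2]

lemma a0_mem : (2 - Real.sqrt 2) ∈ calA := Or.inr rfl

lemma calA_cases {a : ℝ} (ha : a ∈ calA) :
    a = 2 - Real.sqrt 2 ∨ ∃ j : ℕ, 1 ≤ j ∧ a = 2 - Real.sqrt 2 + (4 : ℝ) ^ (-(j : ℤ)) := by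
  rcases ha with h | h
  · exact Or.inr h
  · exact Or.inl h

lemma eps_pos (j : ℕ) : (0:ℝ) < (4 : ℝ) ^ (-(j : ℤ)) := by positivity
lemma eps_le_quarter {j : ℕ} (hj : 1 ≤ j) : (4 : ℝ) ^ (-(j : ℤ)) ≤ 1/4 := by
  have : (4 : ℝ) ^ (-(j : ℤ)) ≤ (4 : ℝ) ^ (-(1 : ℤ)) := by
    apply zpow_le_zpow_right₀ (by norm_num)
    have : (1:ℤ) ≤ (j:ℤ) := by exact_mod_cast hj
    omega
  simpa using this

lemma calA_mem_bounds {a : ℝ} (ha : a ∈ calA) :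
    2 - Real.sqrt 2 ≤ a ∧ a ≤ 9/4 - Real.sqrt 2 := by
  rcases calA_cases ha with rfl | ⟨j, hj, rfl⟩
  · constructor <;> nlinarith [sq2_lb]
  · have h1 := eps_pos j
    have h2 := eps_le_quarter hj
    constructor <;> nlinarith

lemma coefA {a : ℝ} (ha : a ∈ calA) : 0.16 ≤ a ∧ a ≤ 1 := by
  obtain ⟨h1, h2⟩ := calA_mem_bounds ha
  constructor <;> nlinarith [sq2_lb, sq2_ub]
lemma coefB {a : ℝ} (ha : a ∈ calA) : 0.16 ≤ 1 - a ∧ 1 - a ≤ 1 := by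
  obtain ⟨h1, h2⟩ := calA_mem_bounds ha
  constructor <;> nlinarith [sq2_lb, sq2_ub]

lemma nnf_ub {a : ℝ} (ha : a ∈ calA) (s : ℝ) : nnf a s ≤ |s| + 2 := by
  obtain ⟨h1, h2⟩ := coefA ha
  have h3 : a * s ≤ a * |s| := mul_le_mul_of_nonneg_left (le_abs_self s) (by linarith)
  have h4 : a * |s| ≤ 1 * |s| := mul_le_mul_of_nonneg_right h2 (abs_nonneg s)
  calc nnf a s ≤ a*s - 2*(1-a) := min_le_left _ _
    _ ≤ |s| + 2 := by nlinarith

lemma mmf_ub {a : ℝ} (ha : a ∈ calA) (s : ℝ) : mmf a s ≤ |s| + 2 := by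
  obtain ⟨h1, h2⟩ := coefA ha
  have h3 : a * (-s) ≤ a * |s| := mul_le_mul_of_nonneg_left (neg_le_abs s) (by linarith)
  have h4 : a * |s| ≤ 1 * |s| := mul_le_mul_of_nonneg_right h2 (abs_nonneg s)
  calc mmf a s ≤ 2*(1-a) - a*s := min_le_left _ _
    _ ≤ |s| + 2 := by nlinarith

lemma bddAbove_nnf (s : ℝ) : BddAbove ((fun a => nnf a s) '' calA) := by
  refine ⟨|s| + 2, ?_⟩
  rintro x ⟨a, ha, rfl⟩
  exact nnf_ub ha s

lemma bddAbove_mmf (s : ℝ) : BddAbove ((fun a => mmf a s) '' calA) := by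
  refine ⟨|s| + 2, ?_⟩
  rintro x ⟨a, ha, rfl⟩
  exact mmf_ub ha s

lemma le_FF {a : ℝ} (ha : a ∈ calA) (s : ℝ) : nnf a s ≤ FF s :=
  le_csSup (bddAbove_nnf s) ⟨a, ha, rfl⟩
lemma le_GG {a : ℝ} (ha : a ∈ calA) (s : ℝ) : mmf a s ≤ GG s :=
  le_csSup (bddAbove_mmf s) ⟨a, ha, rfl⟩
lemma FF_le {s c : ℝ} (h : ∀ a ∈ calA, nnf a s ≤ c) : FF s ≤ c := by
  have hne : ((fun a => nnf a s) '' calA).Nonempty := ⟨nnf (2 - Real.sqrt 2) s, _, a0_mem, rfl⟩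
  apply csSup_le hne
  rintro x ⟨a, ha, rfl⟩; exact h a ha
lemma GG_le {s c : ℝ} (h : ∀ a ∈ calA, mmf a s ≤ c) : GG s ≤ c := by
  have hne : ((fun a => mmf a s) '' calA).Nonempty := ⟨mmf (2 - Real.sqrt 2) s, _, a0_mem, rfl⟩
  apply csSup_le hne
  rintro x ⟨a, ha, rfl⟩; exact h a ha

lemma FF_mono {s s' : ℝ} (h : s ≤ s') : FF s + 0.16*(s'-s) ≤ FF s' := by
  have key : ∀ a ∈ calA, nnf a s ≤ FF s' - 0.16*(s'-s) := by
    intro a ha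
    have hΔ : (0:ℝ) ≤ s' - s := by linarith
    have hc1 := mul_le_mul_of_nonneg_right (coefA ha).1 hΔ
    have hc2 := mul_le_mul_of_nonneg_right (coefB ha).1 hΔ
    have hm : nnf a s + 0.16*(s'-s) ≤ nnf a s' := by
      apply le_min
      · have := min_le_left (a*s - 2*(1-a)) ((1-a)*s - a)
        rw [← nnf] at this; nlinarith
      · have := min_le_right (a*s - 2*(1-a)) ((1-a)*s - a)
        rw [← nnf] at this; nlinarith
    linarith [le_FF ha s']
  linarith [FF_le key]

lemma GG_anti {s s' : ℝ} (h : s ≤ s') : GG s' + 0.16*(s'-s) ≤ GG s := by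
  have key : ∀ a ∈ calA, mmf a s' ≤ GG s - 0.16*(s'-s) := by
    intro a ha
    have hΔ : (0:ℝ) ≤ s' - s := by linarith
    have hc1 := mul_le_mul_of_nonneg_right (coefA ha).1 hΔ
    have hc2 := mul_le_mul_of_nonneg_right (coefB ha).1 hΔ
    have hm : mmf a s' + 0.16*(s'-s) ≤ mmf a s := by
      apply le_min
      · have := min_le_left (2*(1-a) - a*s') (a - (1-a)*s')
        rw [← mmf] at this; nlinarith
      · have := min_le_right (2*(1-a) - a*s') (a - (1-a)*s')
        rw [← mmf] at this; nlinarith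
    linarith [le_GG ha s]
  linarith [GG_le key]

lemma nnf_a0 {δ : ℝ} (hδ : 0 ≤ δ) :
    nnf (2 - Real.sqrt 2) (Real.sqrt 2 - δ) = -((2 - Real.sqrt 2)*δ) := by
  unfold nnf
  have e1 : (2 - Real.sqrt 2)*(Real.sqrt 2 - δ) - 2*(1-(2 - Real.sqrt 2)) =
      -((2 - Real.sqrt 2)*δ) := by linear_combination -sq2_sq
  have e2 : (1-(2 - Real.sqrt 2))*(Real.sqrt 2 - δ) - (2 - Real.sqrt 2) =
      -((Real.sqrt 2 - 1)*δ) := by linear_combination sq2_sq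
  rw [e1, e2]
  rw [min_eq_left (by nlinarith [sq2_lb, sq2_ub])]

lemma mmf_a0 {δ : ℝ} (hδ : 0 ≤ δ) :
    mmf (2 - Real.sqrt 2) (Real.sqrt 2 - δ) = (Real.sqrt 2 - 1)*δ := by
  unfold mmf
  have e1 : 2*(1-(2 - Real.sqrt 2)) - (2 - Real.sqrt 2)*(Real.sqrt 2 - δ) =
      (2 - Real.sqrt 2)*δ := by linear_combination sq2_sq
  have e2 : (2 - Real.sqrt 2) - (1-(2 - Real.sqrt 2))*(Real.sqrt 2 - δ) =
      (Real.sqrt 2 - 1)*δ := by linear_combination -sq2_sq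
  rw [e1, e2]
  rw [min_eq_right (by nlinarith [sq2_lb, sq2_ub])]

lemma FF_sqrt2_nonneg : 0 ≤ FF (Real.sqrt 2) := by
  have := le_FF a0_mem (Real.sqrt 2)
  have h0 : nnf (2 - Real.sqrt 2) (Real.sqrt 2) = 0 := by
    have := nnf_a0 (le_refl 0)
    simpa using this
  linarith

lemma GG_sqrt2_nonneg : 0 ≤ GG (Real.sqrt 2) := by
  have := le_GG a0_mem (Real.sqrt 2)
  have h0 : mmf (2 - Real.sqrt 2) (Real.sqrt 2) = 0 := by
    have := mmf_a0 (le_refl 0)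
    simpa using this
  linarith

lemma FF_sqrt2_nonpos : FF (Real.sqrt 2) ≤ 0 := by
  apply FF_le
  intro a ha
  rcases calA_cases ha with rfl | ⟨j, hj, rfl⟩
  · have := nnf_a0 (le_refl 0); simp at this; simp [this]
  · have hε := eps_pos j
    calc nnf _ _ ≤ (1-(2 - Real.sqrt 2 + (4:ℝ)^(-(j:ℤ))))*(Real.sqrt 2) -
        (2 - Real.sqrt 2 + (4:ℝ)^(-(j:ℤ))) := min_le_right _ _
      _ = -((4:ℝ)^(-(j:ℤ))*(1 + Real.sqrt 2)) := by linear_combination sq2_sq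
      _ ≤ 0 := by nlinarith [sq2_lb]

lemma GG_sqrt2_nonpos : GG (Real.sqrt 2) ≤ 0 := by
  apply GG_le
  intro a ha
  rcases calA_cases ha with rfl | ⟨j, hj, rfl⟩
  · have := mmf_a0 (le_refl 0); simp at this; simp [this]
  · have hε := eps_pos j
    calc mmf _ _ ≤ 2*(1-(2 - Real.sqrt 2 + (4:ℝ)^(-(j:ℤ)))) -
        (2 - Real.sqrt 2 + (4:ℝ)^(-(j:ℤ)))*(Real.sqrt 2) := min_le_left _ _
      _ = -((4:ℝ)^(-(j:ℤ))*(2 + Real.sqrt 2)) := by linear_combination sq2_sq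
      _ ≤ 0 := by nlinarith [sq2_lb]

lemma window_F {δ : ℝ} (hδ0 : 0 < δ) (hδ1 : δ ≤ 0.0047)
    (hgrid : ∀ j : ℕ, 1 ≤ j → (4:ℝ)^(-(j:ℤ)) ≤ δ/76 ∨ δ/19 ≤ (4:ℝ)^(-(j:ℤ))) :
    FF (Real.sqrt 2 - δ) ≤ (Real.sqrt 2 - 1.955)*δ := by
  apply FF_le
  intro a ha
  rcases calA_cases ha with rfl | ⟨j, hj, rfl⟩
  · rw [nnf_a0 hδ0.le]
    nlinarith [sq2_lb, sq2_ub]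
  · set ε := (4:ℝ)^(-(j:ℤ)) with hεdef
    have hε0 := eps_pos j
    have hεq := eps_le_quarter hj
    rcases hgrid j hj with hsmall | hlarge
    · have hb : nnf (2 - Real.sqrt 2 + ε) (Real.sqrt 2 - δ) ≤
          ε*(2 + Real.sqrt 2) - (2 - Real.sqrt 2 + ε)*δ := by
        have := min_le_left ((2 - Real.sqrt 2 + ε)*(Real.sqrt 2 - δ) - 2*(1-(2 - Real.sqrt 2 + ε)))
          ((1-(2 - Real.sqrt 2 + ε))*(Real.sqrt 2 - δ) - (2 - Real.sqrt 2 + ε))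
        rw [← nnf] at this
        calc nnf (2 - Real.sqrt 2 + ε) (Real.sqrt 2 - δ) ≤ _ := this
          _ = ε*(2 + Real.sqrt 2) - (2 - Real.sqrt 2 + ε)*δ := by linear_combination -sq2_sq
      have hkey : ε*(2 + Real.sqrt 2) ≤ (δ/76)*(2 + Real.sqrt 2) :=
        mul_le_mul_of_nonneg_right hsmall (by nlinarith [sq2_lb])
      nlinarith [mul_nonneg hε0.le hδ0.le, sq2_ub, mul_pos hδ0 hδ0]
    · have hb : nnf (2 - Real.sqrt 2 + ε) (Real.sqrt 2 - δ) ≤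
          -(ε*(1 + Real.sqrt 2 - δ)) - (Real.sqrt 2 - 1)*δ := by
        have := min_le_right ((2 - Real.sqrt 2 + ε)*(Real.sqrt 2 - δ) - 2*(1-(2 - Real.sqrt 2 + ε)))
          ((1-(2 - Real.sqrt 2 + ε))*(Real.sqrt 2 - δ) - (2 - Real.sqrt 2 + ε))
        rw [← nnf] at this
        calc nnf (2 - Real.sqrt 2 + ε) (Real.sqrt 2 - δ) ≤ _ := this
          _ = -(ε*(1 + Real.sqrt 2 - δ)) - (Real.sqrt 2 - 1)*δ := by linear_combination sq2_sq
      have hkey : (δ/19)*(1 + Real.sqrt 2 - δ) ≤ ε*(1 + Real.sqrt 2 - δ) :=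
        mul_le_mul_of_nonneg_right hlarge (by nlinarith [sq2_lb])
      have hcoef : (2.955 - 2*Real.sqrt 2 - (1 + Real.sqrt 2 - δ)/19) ≤ 0 := by
        linarith [sq2_lb]
      have hcd : (2.955 - 2*Real.sqrt 2 - (1 + Real.sqrt 2 - δ)/19)*δ ≤ 0 :=
        mul_nonpos_iff.mpr (Or.inr ⟨hcoef, hδ0.le⟩)
      nlinarith [hkey, hcd]

lemma window_G {δ : ℝ} (hδ0 : 0 < δ) (hδ1 : δ ≤ 0.0047)
    (hgrid : ∀ j : ℕ, 1 ≤ j → (4:ℝ)^(-(j:ℤ)) ≤ δ/76 ∨ δ/19 ≤ (4:ℝ)^(-(j:ℤ))) :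
    GG (Real.sqrt 2 - δ) ≤ (Real.sqrt 2 - 0.955)*δ := by
  apply GG_le
  intro a ha
  rcases calA_cases ha with rfl | ⟨j, hj, rfl⟩
  · rw [mmf_a0 hδ0.le]
    nlinarith [sq2_lb, sq2_ub]
  · set ε := (4:ℝ)^(-(j:ℤ)) with hεdef
    have hε0 := eps_pos j
    have hεq := eps_le_quarter hj
    rcases hgrid j hj with hsmall | hlarge
    · have hb : mmf (2 - Real.sqrt 2 + ε) (Real.sqrt 2 - δ) ≤
          ε*(1 + Real.sqrt 2) + (Real.sqrt 2 - 1 - ε)*δ := by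
        have := min_le_right (2*(1-(2 - Real.sqrt 2 + ε)) - (2 - Real.sqrt 2 + ε)*(Real.sqrt 2 - δ))
          ((2 - Real.sqrt 2 + ε) - (1-(2 - Real.sqrt 2 + ε))*(Real.sqrt 2 - δ))
        rw [← mmf] at this
        calc mmf (2 - Real.sqrt 2 + ε) (Real.sqrt 2 - δ) ≤ _ := this
          _ = ε*(1 + Real.sqrt 2) + (Real.sqrt 2 - 1 - ε)*δ := by linear_combination -sq2_sq
      have hkey : ε*(1 + Real.sqrt 2) ≤ (δ/76)*(1 + Real.sqrt 2) :=
        mul_le_mul_of_nonneg_right hsmall (by nlinarith [sq2_lb])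
      nlinarith [mul_nonneg hε0.le hδ0.le, sq2_ub]
    · have hb : mmf (2 - Real.sqrt 2 + ε) (Real.sqrt 2 - δ) ≤
          -(ε*(2 + Real.sqrt 2 - δ)) + (2 - Real.sqrt 2)*δ := by
        have := min_le_left (2*(1-(2 - Real.sqrt 2 + ε)) - (2 - Real.sqrt 2 + ε)*(Real.sqrt 2 - δ))
          ((2 - Real.sqrt 2 + ε) - (1-(2 - Real.sqrt 2 + ε))*(Real.sqrt 2 - δ))
        rw [← mmf] at this
        calc mmf (2 - Real.sqrt 2 + ε) (Real.sqrt 2 - δ) ≤ _ := this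
          _ = -(ε*(2 + Real.sqrt 2 - δ)) + (2 - Real.sqrt 2)*δ := by linear_combination sq2_sq
      have hkey : (δ/19)*(2 + Real.sqrt 2 - δ) ≤ ε*(2 + Real.sqrt 2 - δ) :=
        mul_le_mul_of_nonneg_right hlarge (by nlinarith [sq2_lb])
      have hcoef : ((2 - Real.sqrt 2) - (Real.sqrt 2 - 0.955) - (2 + Real.sqrt 2 - δ)/19) ≤ 0 := by
        linarith [sq2_lb]
      have hcd : ((2 - Real.sqrt 2) - (Real.sqrt 2 - 0.955) - (2 + Real.sqrt 2 - δ)/19)*δ ≤ 0 :=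
        mul_nonpos_iff.mpr (Or.inr ⟨hcoef, hδ0.le⟩)
      nlinarith [hkey, hcd]

lemma grid_cond {k : ℕ} (hk : 6 ≤ k) (j : ℕ) (hj : 1 ≤ j) :
    (4:ℝ)^(-(j:ℤ)) ≤ (19*(4:ℝ)^(-(k:ℤ)))/76 ∨ (19*(4:ℝ)^(-(k:ℤ)))/19 ≤ (4:ℝ)^(-(j:ℤ)) := by
  by_cases hjk : j ≤ k
  · right
    have : (4:ℝ)^(-(k:ℤ)) ≤ (4:ℝ)^(-(j:ℤ)) := by
      apply zpow_le_zpow_right₀ (by norm_num)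
      have : (j:ℤ) ≤ (k:ℤ) := by exact_mod_cast hjk
      omega
    linarith
  · left
    push_neg at hjk
    have h1 : (4:ℝ)^(-(j:ℤ)) ≤ (4:ℝ)^(-(k:ℤ)-1) := by
      apply zpow_le_zpow_right₀ (by norm_num)
      have : (k:ℤ) < (j:ℤ) := by exact_mod_cast hjk
      omega
    have h2 : (4:ℝ)^(-(k:ℤ)-1) = (4:ℝ)^(-(k:ℤ)) * (4:ℝ)⁻¹ := by
      rw [← zpow_sub_one₀ (by norm_num : (4:ℝ) ≠ 0)]
    rw [h2] at h1
    linarith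

lemma delta_bounds {k : ℕ} (hk : 6 ≤ k) :
    0 < 19*(4:ℝ)^(-(k:ℤ)) ∧ 19*(4:ℝ)^(-(k:ℤ)) ≤ 0.0047 := by
  constructor
  · positivity
  · have : (4:ℝ)^(-(k:ℤ)) ≤ (4:ℝ)^(-(6:ℤ)) := by
      apply zpow_le_zpow_right₀ (by norm_num)
      have : (6:ℤ) ≤ (k:ℤ) := by exact_mod_cast hk
      omega
    have h6 : (4:ℝ)^(-(6:ℤ)) = 1/4096 := by norm_num
    rw [h6] at this
    linarith

lemma pow_conv (k : ℕ) : (4:ℝ)^(-(k:ℤ)) = (1/4:ℝ)^k := by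
  rw [zpow_neg, zpow_natCast, one_div, inv_pow]

/-- The key frequency lemma: along an explicit sequence of discount rates the
solution is pinned down exactly and satisfies the desired lower bounds. -/
lemma key_aux (X Y : ℝ → ℝ)
    (hsol : ∀ lam : ℝ, 0 < lam →
      lam * X lam + Bop 0 (X lam) (Y lam) = 0 ∧
      lam * Y lam + Bop 1 (X lam) (Y lam) = 0)
    (δ : ℝ) (hδ0 : 0 < δ) (hδ1 : δ ≤ 0.0047)
    (hgrid : ∀ j : ℕ, 1 ≤ j → (4:ℝ)^(-(j:ℤ)) ≤ δ/76 ∨ δ/19 ≤ (4:ℝ)^(-(j:ℤ))) :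
    ∃ lam : ℝ, 0 < lam ∧ lam ≤ δ ∧ 0.72 ≤ X lam ∧ -0.69 ≤ Y lam := by
  obtain ⟨s, hsdef⟩ : ∃ s : ℝ, s = Real.sqrt 2 - δ := ⟨_, rfl⟩
  have hFu : FF s ≤ (Real.sqrt 2 - 1.955)*δ := by
    rw [hsdef]; exact window_F hδ0 hδ1 hgrid
  have hGu : GG s ≤ (Real.sqrt 2 - 0.955)*δ := by
    rw [hsdef]; exact window_G hδ0 hδ1 hgrid
  have hFl : -((2 - Real.sqrt 2)*δ) ≤ FF s := by
    rw [hsdef, ← nnf_a0 hδ0.le]; exact le_FF a0_mem _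
  have hGl : (Real.sqrt 2 - 1)*δ ≤ GG s := by
    rw [hsdef, ← mmf_a0 hδ0.le]; exact le_GG a0_mem _
  -- rational brackets
  have hP1 : 0.5407*δ ≤ -FF s := by nlinarith [sq2_ub]
  have hP2 : -FF s ≤ 0.5858*δ := by nlinarith [sq2_lb]
  have hQ1 : 0.4142*δ ≤ GG s := by nlinarith [sq2_lb]
  have hQ2 : GG s ≤ 0.46*δ := by nlinarith [sq2_ub]
  have hs1 : 1.409 ≤ s := by rw [hsdef]; nlinarith [sq2_lb]
  have hs2 : s ≤ 1.41422 := by rw [hsdef]; nlinarith [sq2_ub]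
  have hs0 : 0 < s := by linarith
  obtain ⟨lam, hlamdef⟩ : ∃ l : ℝ, l = (GG s - FF s)/s := ⟨_, rfl⟩
  have hlam_mul : lam * s = GG s - FF s := by
    rw [hlamdef]; exact div_mul_cancel₀ _ (ne_of_gt hs0)
  have hlam0 : 0 < lam := by
    rw [hlamdef]; exact div_pos (by linarith) hs0
  have hlamub : lam ≤ 0.7424*δ := by
    have h1 : 1.409*lam ≤ s*lam := mul_le_mul_of_nonneg_right hs1 hlam0.le
    nlinarith [hlam_mul]
  have hlamlb : 0.675*δ ≤ lam := by
    have h1 : s*lam ≤ 1.41422*lam := mul_le_mul_of_nonneg_right hs2 hlam0.le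
    nlinarith [hlam_mul]
  obtain ⟨E1, E2⟩ := hsol lam hlam0
  rw [Bop0_eq] at E1
  rw [Bop1_eq] at E2
  obtain ⟨sh, hshdef⟩ : ∃ t : ℝ, t = X lam - Y lam := ⟨_, rfl⟩
  rw [← hshdef] at E1 E2
  have Esh : lam * sh = GG sh - FF sh := by
    have h : lam * sh = lam * X lam - lam * Y lam := by rw [hshdef]; ring
    linarith [E1, E2]
  have hshs : sh = s := by
    rcases lt_trichotomy sh s with hlt | heq | hgt
    · exfalso
      have m1 := FF_mono hlt.le
      have m2 := GG_anti hlt.le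
      have m3 : lam*sh < lam*s := mul_lt_mul_of_pos_left hlt hlam0
      linarith [Esh, hlam_mul]
    · exact heq
    · exfalso
      have m1 := FF_mono hgt.le
      have m2 := GG_anti hgt.le
      have m3 : lam*s < lam*sh := mul_lt_mul_of_pos_left hgt hlam0
      linarith [Esh, hlam_mul]
  rw [hshs] at E1 E2
  refine ⟨lam, hlam0, by linarith, ?_, ?_⟩
  · -- 0.72 ≤ X lam
    have h1 : lam * 0.72 ≤ lam * X lam := by
      have h2 : lam * X lam = -FF s := by linarith
      linarith
    exact le_of_mul_le_mul_left h1 hlam0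
  · -- -0.69 ≤ Y lam
    have h1 : lam * (-0.69) ≤ lam * Y lam := by
      have h2 : lam * Y lam = -GG s := by linarith
      linarith
    exact le_of_mul_le_mul_left h1 hlam0

lemma key_lemma (X Y : ℝ → ℝ)
    (hsol : ∀ lam : ℝ, 0 < lam →
      lam * X lam + Bop 0 (X lam) (Y lam) = 0 ∧
      lam * Y lam + Bop 1 (X lam) (Y lam) = 0)
    (k : ℕ) (hk : 6 ≤ k) :
    ∃ lam : ℝ, 0 < lam ∧ lam ≤ 19*(1/4:ℝ)^k ∧ 0.72 ≤ X lam ∧ -0.69 ≤ Y lam := by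
  obtain ⟨hδ0, hδ1⟩ := delta_bounds hk
  obtain ⟨lam, h0, h1, h2, h3⟩ := key_aux X Y hsol _ hδ0 hδ1 (grid_cond hk)
  exact ⟨lam, h0, by rw [← pow_conv]; linarith, h2, h3⟩

lemma global_bound (X Y : ℝ → ℝ)
    (hsol : ∀ lam : ℝ, 0 < lam →
      lam * X lam + Bop 0 (X lam) (Y lam) = 0 ∧
      lam * Y lam + Bop 1 (X lam) (Y lam) = 0)
    (lam : ℝ) (hlam : 0 < lam) : X lam ≤ 6 ∧ Y lam ≤ 0 := by
  obtain ⟨E1, E2⟩ := hsol lam hlam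
  rw [Bop0_eq] at E1
  rw [Bop1_eq] at E2
  set s : ℝ := X lam - Y lam with hsdef
  have Esh : lam * s = GG s - FF s := by
    have h : lam * s = lam * X lam - lam * Y lam := by rw [hsdef]; ring
    linarith [E1, E2]
  have hslt : s < Real.sqrt 2 := by
    by_contra hge
    push_neg at hge
    have m1 := FF_mono hge
    have m2 := GG_anti hge
    have hpos : 0 < lam * s := mul_pos hlam (by nlinarith [sq2_lb])
    have := FF_sqrt2_nonneg
    have := GG_sqrt2_nonpos
    nlinarith [sq2_lb]
  set δh : ℝ := Real.sqrt 2 - s with hδdef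
  have hδh0 : 0 < δh := by rw [hδdef]; linarith
  have m1 := FF_mono (show s ≤ Real.sqrt 2 by linarith)
  have m2 := GG_anti (show s ≤ Real.sqrt 2 by linarith)
  have hF : FF s ≤ -(0.16*δh) := by
    have := FF_sqrt2_nonpos
    rw [hδdef]; linarith
  have hG : 0.16*δh ≤ GG s := by
    have := GG_sqrt2_nonneg
    rw [hδdef]; linarith
  have hspos : 0 < s := by
    by_contra hsn
    push_neg at hsn
    have : lam * s ≤ 0 := mul_nonpos_iff.mpr (Or.inl ⟨hlam.le, hsn⟩)
    linarith
  have hδlam : δh ≤ 4.42*lam := by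
    have h1 : lam * s ≤ lam * Real.sqrt 2 := mul_le_mul_of_nonneg_left (by linarith) hlam.le
    nlinarith [sq2_ub]
  constructor
  · -- X lam ≤ 6
    have hFl : -((2 - Real.sqrt 2)*δh) ≤ FF s := by
      have hseq : s = Real.sqrt 2 - δh := by rw [hδdef]; ring
      rw [hseq, ← nnf_a0 hδh0.le]
      exact le_FF a0_mem _
    have h1 : lam * X lam ≤ lam * 6 := by
      have hXe : lam * X lam = -FF s := by linarith
      nlinarith [sq2_lb]
    exact le_of_mul_le_mul_left h1 hlam
  · have h1 : lam * Y lam ≤ lam * 0 := by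
      have hYe : lam * Y lam = -GG s := by linarith
      nlinarith
    exact le_of_mul_le_mul_left h1 hlam

theorem limsup_bounds (X Y : ℝ → ℝ)
    (hsol : ∀ lam : ℝ, 0 < lam →
      lam * X lam + Bop 0 (X lam) (Y lam) = 0 ∧
      lam * Y lam + Bop 1 (X lam) (Y lam) = 0) :
    1 / Real.sqrt 2 < Filter.limsup X (𝓝[>] (0 : ℝ)) ∧
    -(1 / Real.sqrt 2) < Filter.limsup Y (𝓝[>] (0 : ℝ)) := by
  have hkey : ∀ n : ℕ, ∃ lam : ℝ, 0 < lam ∧ lam ≤ 19*(1/4:ℝ)^(n+6) ∧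
      0.72 ≤ X lam ∧ -0.69 ≤ Y lam :=
    fun n => key_lemma X Y hsol (n+6) (by omega)
  choose u hu0 hu1 hu2 hu3 using hkey
  have htu : Tendsto u atTop (𝓝[>] (0:ℝ)) := by
    apply tendsto_nhdsWithin_of_tendsto_nhds_of_eventually_within
    · apply squeeze_zero (fun n => (hu0 n).le) (fun n => ?_)
        (show Tendsto (fun n : ℕ => 19*(1/4:ℝ)^n) atTop (𝓝 0) by
          have h := tendsto_pow_atTop_nhds_zero_of_lt_one
            (show (0:ℝ) ≤ 1/4 by norm_num) (show (1/4:ℝ) < 1 by norm_num)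
          simpa using h.const_mul (19:ℝ))
      calc u n ≤ 19*(1/4:ℝ)^(n+6) := hu1 n
        _ ≤ 19*(1/4:ℝ)^n := by
          have := pow_le_pow_of_le_one (show (0:ℝ) ≤ 1/4 by norm_num)
            (show (1/4:ℝ) ≤ 1 by norm_num) (show n ≤ n+6 by omega)
          linarith
    · exact Eventually.of_forall (fun n => hu0 n)
  have hfreq : ∃ᶠ lam in 𝓝[>] (0:ℝ), 0.72 ≤ X lam ∧ -0.69 ≤ Y lam :=
    htu.frequently (Frequently.of_forall (fun n => ⟨hu2 n, hu3 n⟩))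
  have hBX : IsBoundedUnder (· ≤ ·) (𝓝[>] (0:ℝ)) X := by
    refine isBoundedUnder_of_eventually_le (a := 6) ?_
    filter_upwards [self_mem_nhdsWithin] with lam hlam
    exact (global_bound X Y hsol lam hlam).1
  have hBY : IsBoundedUnder (· ≤ ·) (𝓝[>] (0:ℝ)) Y := by
    refine isBoundedUnder_of_eventually_le (a := 0) ?_
    filter_upwards [self_mem_nhdsWithin] with lam hlam
    exact (global_bound X Y hsol lam hlam).2
  constructor
  · have h1 : (0.72:ℝ) ≤ Filter.limsup X (𝓝[>] (0:ℝ)) :=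
      le_limsup_of_frequently_le (hfreq.mono (fun lam h => h.1)) hBX
    have h2 : 1 / Real.sqrt 2 < 0.72 := by
      rw [div_lt_iff₀ (by positivity)]
      nlinarith [sq2_lb]
    linarith
  · have h1 : (-0.69:ℝ) ≤ Filter.limsup Y (𝓝[>] (0:ℝ)) :=
      le_limsup_of_frequently_le (hfreq.mono (fun lam h => h.2)) hBY
    have h2 : -(1 / Real.sqrt 2) < -0.69 := by
      rw [neg_lt_neg_iff, lt_div_iff₀ (by positivity)]
      nlinarith [sq2_ub]
    linarith
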